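/- Let π be a permutation of {1,...,n} and let ω ∈ ℂ satisfy 1 + ω + ω² = 0. Suppose for each oriented edge (u,v) of a graph G, X_{uv} is a random variable uniform on {1, ω, ω²}, independent across edges, with X_{vu} = X_{uv}^{-1}. If there exists a vertex u with π(u) = v, {u,v} an edge, and π(v) ≠ u, then E[∏_{j : π(j)≠j, {j,π(j)}∈E} X_{j,π(j)}] = 0. -/

import Mathlib

/-- The antisymmetric shift function determined by independent values `f u v` on
oriented edges `(u,v)` with `u < v`. -/
def orientShift {V : Type} [LinearOrder V] {k : ℕ} (f : V → V → ZMod k) (u v : V) : ZMod k :=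
  if u < v then f u v else - f v u

/-- Bump the value of `f` at the oriented edge `(a,b)` by one. -/
def bump {V : Type} [DecidableEq V] (a b : V) (f : V → V → ZMod 3) : V → V → ZMod 3 :=
  fun x y => if x = a ∧ y = b then f x y + 1 else f x y

private lemma pow_mod3 (ω : ℂ) (hω3 : ω ^ 3 = 1) (m : ℕ) : ω ^ (m % 3) = ω ^ m := by
  conv_rhs => rw [← Nat.div_add_mod m 3, pow_add, pow_mul, hω3, one_pow, one_mul]

private lemma pow_val_add (ω : ℂ) (hω3 : ω ^ 3 = 1) (c d : ZMod 3) :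
    ω ^ (c + d).val = ω ^ c.val * ω ^ d.val := by
  rw [ZMod.val_add, pow_mod3 ω hω3, pow_add]

private lemma aux_sum_zero {V : Type} [Fintype V] [DecidableEq V] [LinearOrder V]
    (π : Equiv.Perm V) (ω : ℂ) (hω3 : ω ^ 3 = 1)
    (F : Finset V) (u a b : V) (huF : u ∈ F) (c : ZMod 3)
    (hc : ω ^ c.val ≠ 1)
    (hu : ∀ f : V → V → ZMod 3,
      orientShift (bump a b f) u (π u) = c + orientShift f u (π u))
    (hj : ∀ j ∈ F, j ≠ u → ∀ f : V → V → ZMod 3,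
      orientShift (bump a b f) j (π j) = orientShift f j (π j)) :
    ∑ f : V → V → ZMod 3, ∏ j ∈ F, ω ^ (orientShift f j (π j)).val = 0 := by
  set P : (V → V → ZMod 3) → ℂ :=
    fun f => ∏ j ∈ F, ω ^ (orientShift f j (π j)).val with hP
  show ∑ f : V → V → ZMod 3, P f = 0
  have hbij : Function.Bijective (bump a b) := by
    rw [← Finite.injective_iff_bijective]
    intro f g hfg
    funext x y
    have h2 := congrFun (congrFun hfg x) y
    simp only [bump] at h2
    by_cases hxy : x = a ∧ y = b
    · rw [if_pos hxy, if_pos hxy] at h2; exact add_right_cancel h2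
    · rwa [if_neg hxy, if_neg hxy] at h2
  have reindex : ∑ f : V → V → ZMod 3, P (bump a b f) = ∑ f : V → V → ZMod 3, P f :=
    Fintype.sum_bijective (bump a b) hbij _ _ (fun f => rfl)
  have key : ∀ f : V → V → ZMod 3, P (bump a b f) = ω ^ c.val * P f := by
    intro f
    rw [hP]
    simp only
    rw [← Finset.mul_prod_erase F (fun j => ω ^ (orientShift (bump a b f) j (π j)).val) huF,
        ← Finset.mul_prod_erase F (fun j => ω ^ (orientShift f j (π j)).val) huF,
        ← mul_assoc]
    congr 1
    · rw [hu f, pow_val_add ω hω3]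
    · exact Finset.prod_congr rfl (fun j hjm => by
        rw [hj j (Finset.mem_of_mem_erase hjm) (Finset.ne_of_mem_erase hjm) f])
  have hS : ∑ f : V → V → ZMod 3, P f = ω ^ c.val * ∑ f : V → V → ZMod 3, P f := by
    conv_lhs => rw [← reindex]
    simp only [key]
    rw [← Finset.mul_sum]
  have h0 : (1 - ω ^ c.val) * (∑ f : V → V → ZMod 3, P f) = 0 := by
    linear_combination hS
  rcases mul_eq_zero.mp h0 with h1 | h1
  · exact absurd (by linear_combination -h1 : ω ^ c.val = 1) hc
  · exact h1

/-- If some vertex `u` satisfies `π u = v` with `{u,v}` an edge but `π v ≠ u`, then the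
expectation (over independent uniform cube-root-of-unity variables `X_{uv} = ω^{s(u,v)}`,
with `X_{vu} = X_{uv}⁻¹`) of the product `∏_{j : π j ≠ j, {j, π j} ∈ E} X_{j, π j}`
vanishes. -/
theorem expectation_vanishes_of_nonmatching {V : Type} [Fintype V] [DecidableEq V]
    [LinearOrder V] (G : SimpleGraph V) [DecidableRel G.Adj]
    (π : Equiv.Perm V) (ω : ℂ) (hω : 1 + ω + ω ^ 2 = 0)
    (h : ∃ u v : V, π u = v ∧ G.Adj u v ∧ π v ≠ u) :
    (∑ f : V → V → ZMod 3,
        ∏ j ∈ Finset.univ.filter (fun j : V => π j ≠ j ∧ G.Adj j (π j)),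
          ω ^ (orientShift f j (π j)).val)
      / 3 ^ (Fintype.card V * Fintype.card V) = 0 := by
  obtain ⟨u, v, hπu, hadj, hvu⟩ := h
  have hne : u ≠ v := G.ne_of_adj hadj
  have hω3 : ω ^ 3 = 1 := by linear_combination (ω - 1) * hω
  set F := Finset.univ.filter (fun j : V => π j ≠ j ∧ G.Adj j (π j)) with hF
  have huF : u ∈ F := by
    rw [hF, Finset.mem_filter]
    refine ⟨Finset.mem_univ u, ?_, ?_⟩
    · rw [hπu]; exact fun h' => hne h'.symm
    · rw [hπu]; exact hadj
  suffices hS : ∑ f : V → V → ZMod 3, ∏ j ∈ F, ω ^ (orientShift f j (π j)).val = 0 by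
    rw [hS, zero_div]
  rcases hne.lt_or_gt with hlt | hlt
  · -- u < v, bump coordinate (u, v), multiplier ω
    refine aux_sum_zero π ω hω3 F u u v huF 1 ?_ ?_ ?_
    · intro h1
      rw [show ((1 : ZMod 3)).val = 1 from rfl, pow_one] at h1
      exact absurd (show (3 : ℂ) = 0 by linear_combination hω - (ω + 2) * h1) (by norm_num)
    · intro f
      rw [hπu]
      unfold orientShift bump
      rw [if_pos hlt, if_pos hlt, if_pos ⟨rfl, rfl⟩, add_comm]
    · intro j hjF hju f
      unfold orientShift bump
      by_cases hj2 : j < π j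
      · rw [if_pos hj2, if_pos hj2, if_neg]
        rintro ⟨rfl, -⟩; exact hju rfl
      · rw [if_neg hj2, if_neg hj2, if_neg]
        rintro ⟨h1, rfl⟩; exact hvu h1
  · -- v < u, bump coordinate (v, u), multiplier ω²
    refine aux_sum_zero π ω hω3 F u v u huF 2 ?_ ?_ ?_
    · intro h1
      rw [show ((2 : ZMod 3)).val = 2 from rfl] at h1
      exact absurd (show (3 : ℂ) = 0 by linear_combination (2 - ω) * hω + (ω - 1) * h1)
        (by norm_num)
    · intro f
      have hnlt : ¬ u < v := not_lt_of_gt hlt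
      rw [hπu]
      unfold orientShift bump
      rw [if_neg hnlt, if_neg hnlt, if_pos ⟨rfl, rfl⟩]
      have : ∀ x : ZMod 3, -(x + 1) = 2 + -x := by decide
      exact this _
    · intro j hjF hju f
      unfold orientShift bump
      by_cases hj2 : j < π j
      · rw [if_pos hj2, if_pos hj2, if_neg]
        rintro ⟨rfl, h2⟩; exact hvu h2
      · rw [if_neg hj2, if_neg hj2, if_neg]
        rintro ⟨-, rfl⟩; exact hju rfl
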